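/- Let u be a nonnegative C^2 solution of σ̃_2(D^2 u) = 1 on a domain Ω, and let E ⊂ {u ≤ h} ⊂ Ω be an ellipsoid with affine diffeomorphism A(x) = Mx + b from E onto the unit ball, M symmetric positive definite. Then σ̃_2(M^2) ≥ 1/(4h^2). -/

import Mathlib

open Real Finset

/-- partial derivative ∂ᵢ f -/
noncomputable def pdE (n : ℕ) (f : EuclideanSpace ℝ (Fin n) → ℝ) (i : Fin n)
    (x : EuclideanSpace ℝ (Fin n)) : ℝ :=
  fderiv ℝ f x (EuclideanSpace.single i 1)

/-- Hessian matrix of f at x -/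
noncomputable def HessE (n : ℕ) (f : EuclideanSpace ℝ (Fin n) → ℝ)
    (x : EuclideanSpace ℝ (Fin n)) : Matrix (Fin n) (Fin n) ℝ :=
  fun i j => pdE n (pdE n f j) i x

/-- Donaldson's operator σ̃₂(S) = s₁₁(s₂₂+⋯+sₙₙ) − s₁₂² − ⋯ − s₁ₙ² -/
noncomputable def sig2 (n : ℕ) [NeZero n] (S : Matrix (Fin n) (Fin n) ℝ) : ℝ :=
  S 0 0 * (∑ j ∈ Finset.univ.filter (fun j => j ≠ 0), S j j) -
    ∑ j ∈ Finset.univ.filter (fun j => j ≠ 0), (S 0 j) ^ 2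


/-- At an interior local max, the second derivative (1D) is nonpositive. -/
lemma secondDeriv_nonpos_of_isLocalMax {g g₁ : ℝ → ℝ} {m : ℝ}
    (hg : ∀ t, HasDerivAt g (g₁ t) t) (hg₁ : HasDerivAt g₁ m 0)
    (hmax : IsLocalMax g 0) : m ≤ 0 := by
  by_contra hm
  push_neg at hm
  have h0 : g₁ 0 = 0 := hmax.hasDerivAt_eq_zero (hg 0)
  -- slope of g₁ tends to m > 0
  have hslope : Filter.Tendsto (slope g₁ 0) (nhdsWithin 0 {(0:ℝ)}ᶜ) (nhds m) :=
    hasDerivAt_iff_tendsto_slope.1 hg₁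
  have hpos : ∀ᶠ t in nhdsWithin 0 {(0:ℝ)}ᶜ, 0 < slope g₁ 0 t :=
    hslope.eventually (eventually_gt_nhds hm)
  -- get δ with g₁ positive on Ioo 0 δ
  have hpos' : ∀ᶠ t in nhdsWithin (0:ℝ) (Set.Ioi 0), 0 < g₁ t := by
    have hsub : nhdsWithin (0:ℝ) (Set.Ioi 0) ≤ nhdsWithin 0 {(0:ℝ)}ᶜ :=
      nhdsWithin_mono 0 (fun t ht => ne_of_gt ht)
    filter_upwards [hsub hpos, self_mem_nhdsWithin] with t ht ht'
    have ht'' : (0:ℝ) < t := ht'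
    have : slope g₁ 0 t = g₁ t / t := by simp [slope_def_field, h0]
    rw [this] at ht
    exact (div_pos_iff.1 ht).resolve_right (fun ⟨_, h⟩ => absurd ht'' (not_lt.2 h.le)) |>.1
  rw [eventually_nhdsWithin_iff] at hpos'
  rcases Metric.eventually_nhds_iff.1 hpos' with ⟨δ, hδ, hδ'⟩
  -- g strictly increasing on [0, δ/2]
  have hmono : StrictMonoOn g (Set.Icc 0 (δ/2)) := by
    apply strictMonoOn_of_deriv_pos (convex_Icc _ _)
    · exact Continuous.continuousOn (continuous_iff_continuousAt.2 (fun t => (hg t).continuousAt))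
    · intro t ht
      rw [interior_Icc] at ht
      rw [(hg t).deriv]
      apply hδ'
      · simp [abs_of_pos ht.1]; linarith [ht.2, hδ]
      · exact ht.1
  -- contradiction with local max
  rcases Metric.eventually_nhds_iff.1 hmax with ⟨ε, hε, hε'⟩
  set t : ℝ := min (δ/2) (ε/2) with htdef
  have htpos : 0 < t := lt_min (by linarith) (by linarith)
  have h1 : g 0 < g t := hmono ⟨le_refl 0, by positivity⟩ ⟨htpos.le, min_le_left _ _⟩ htpos
  have h2 : g t ≤ g 0 := by
    apply hε'
    simp [abs_of_pos htpos]
    calc t ≤ ε/2 := min_le_right _ _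
    _ < ε := by linarith
  linarith


lemma sum_ind_ind (n : ℕ) (f : Fin n → Fin n → ℝ) (k l : Fin n) :
    (∑ i, ∑ j, (if i = k then (1:ℝ) else 0) * (if j = l then (1:ℝ) else 0) * f i j) = f k l := by
  simp [ite_mul, Finset.sum_ite_eq']

lemma quad_single (n : ℕ) (S : Matrix (Fin n) (Fin n) ℝ) (k : Fin n) :
    (∑ i, ∑ j, (if i = k then (1:ℝ) else 0) * (if j = k then (1:ℝ) else 0) * S i j) = S k k :=
  sum_ind_ind n (fun i j => S i j) k k

lemma quad_pair (n : ℕ) (S : Matrix (Fin n) (Fin n) ℝ) (k l : Fin n) (t : ℝ) :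
    (∑ i, ∑ j, ((if i = k then (1:ℝ) else 0) + t * (if i = l then 1 else 0))
      * ((if j = k then (1:ℝ) else 0) + t * (if j = l then 1 else 0)) * S i j)
      = S k k + t * (S k l + S l k) + t * t * S l l := by
  have key : ∀ i j, ((if i = k then (1:ℝ) else 0) + t * (if i = l then 1 else 0))
      * ((if j = k then (1:ℝ) else 0) + t * (if j = l then 1 else 0)) * S i j
      = (if i = k then (1:ℝ) else 0) * (if j = k then (1:ℝ) else 0) * S i j
        + t * ((if i = k then (1:ℝ) else 0) * (if j = l then (1:ℝ) else 0) * S i j)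
        + t * ((if i = l then (1:ℝ) else 0) * (if j = k then (1:ℝ) else 0) * S i j)
        + t * t * ((if i = l then (1:ℝ) else 0) * (if j = l then (1:ℝ) else 0) * S i j) := by
    intro i j; ring
  simp_rw [key, Finset.sum_add_distrib, ← Finset.mul_sum]
  rw [sum_ind_ind n (fun i j => S i j) k k, sum_ind_ind n (fun i j => S i j) k l,
    sum_ind_ind n (fun i j => S i j) l k, sum_ind_ind n (fun i j => S i j) l l]
  ring

/-- Algebraic core. -/
lemma sig2_mono (n : ℕ) [NeZero n] (S T : Matrix (Fin n) (Fin n) ℝ)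
    (hSsymm : ∀ j, S 0 j = S j 0) (hTsymm : ∀ j, T 0 j = T j 0)
    (hQ : ∀ w : EuclideanSpace ℝ (Fin n),
      (∑ i, ∑ j, w i * w j * S i j) ≤ ∑ i, ∑ j, w i * w j * T i j)
    (hs : sig2 n S = 1) (ha : 0 < S 0 0) : 1 ≤ sig2 n T := by
  classical
  set J := Finset.univ.filter (fun j : Fin n => j ≠ 0) with hJ
  have hdiag : ∀ k : Fin n, S k k ≤ T k k := by
    intro k
    have := hQ (WithLp.toLp 2 (fun i => if i = k then (1:ℝ) else 0))
    simp only [WithLp.ofLp_toLp] at this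
    rwa [quad_single, quad_single] at this
  set a := S 0 0
  set r := T 0 0 - S 0 0 with hr
  have hr0 : 0 ≤ r := by have := hdiag 0; simp only [hr]; linarith
  have hdisc : ∀ l ∈ J, (T 0 l - S 0 l)^2 ≤ r * (T l l - S l l) := by
    intro l hl
    have key : ∀ t : ℝ, 0 ≤ (T l l - S l l) * (t * t) + (2*(T 0 l - S 0 l)) * t + r := by
      intro t
      have := hQ (WithLp.toLp 2 (fun i => (if i = 0 then (1:ℝ) else 0) + t * (if i = l then 1 else 0)))
      simp only [WithLp.ofLp_toLp] at this
      rw [quad_pair n S 0 l t, quad_pair n T 0 l t] at this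
      have e1 : S 0 l + S l 0 = 2 * S 0 l := by rw [← hSsymm]; ring
      have e2 : T 0 l + T l 0 = 2 * T 0 l := by rw [← hTsymm]; ring
      rw [e1] at this; rw [e2] at this
      nlinarith [this]
    have := discrim_le_zero key
    rw [discrim] at this
    nlinarith [this]
  set τ := ∑ j ∈ J, S j j with hτ
  set τR := ∑ j ∈ J, (T j j - S j j) with hτR
  set C := ∑ j ∈ J, (S 0 j)^2 with hC
  set D := ∑ j ∈ J, (T 0 j - S 0 j)^2 with hD
  set X := ∑ j ∈ J, (S 0 j) * (T 0 j - S 0 j) with hX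
  have hτR0 : 0 ≤ τR := Finset.sum_nonneg (fun j hj => by linarith [hdiag j])
  have hC0 : 0 ≤ C := Finset.sum_nonneg (fun j _ => sq_nonneg _)
  have hD0 : 0 ≤ D := Finset.sum_nonneg (fun j _ => sq_nonneg _)
  have hDP : D ≤ r * τR := by
    calc D ≤ ∑ j ∈ J, r * (T j j - S j j) := Finset.sum_le_sum (fun j hj => hdisc j hj)
    _ = r * τR := by rw [hτR, Finset.mul_sum]
  have hCS : X^2 ≤ C * D := Finset.sum_mul_sq_le_sq_mul_sq J _ _
  have hsig : a * τ - C = 1 := hs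
  have hτpos : 0 < τ := by nlinarith
  have hTexp : sig2 n T = (a + r) * (τ + τR) - (C + 2*X + D) := by
    have h1 : ∑ j ∈ J, T j j = τ + τR := by
      rw [hτ, hτR, ← Finset.sum_add_distrib]
      exact Finset.sum_congr rfl (fun j _ => by ring)
    have h2 : ∑ j ∈ J, (T 0 j)^2 = C + 2*X + D := by
      rw [hC, hX, hD, Finset.mul_sum, ← Finset.sum_add_distrib, ← Finset.sum_add_distrib]
      exact Finset.sum_congr rfl (fun j _ => by ring)
    have h3 : T 0 0 = a + r := by simp only [hr]; ring
    rw [sig2, h3, ← hJ, h1, h2]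
  rw [hTexp]
  -- final inequality: a*τR + r*τ + (r*τR - D) - 2*X ≥ 0
  have hG : 0 ≤ a*τR + r*τ := by
    have := mul_nonneg ha.le hτR0
    have := mul_nonneg hr0 hτpos.le
    linarith
  set R := a*τR + r*τ + (r*τR - D) with hR
  have hR0 : 0 ≤ R := by simp only [hR]; linarith
  have hsq : (2*X)^2 ≤ R^2 := by
    have h1 : (0:ℝ) ≤ (a*τR - r*τ)^2 := sq_nonneg _
    have h2 : 0 ≤ (a*τR + r*τ)*(r*τR - D) := mul_nonneg hG (by linarith)
    have h3 : (0:ℝ) ≤ (r*τR - D)^2 := sq_nonneg _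
    have h4 : 0 ≤ (a*τ)*(r*τR - D) := mul_nonneg (by nlinarith) (by linarith)
    nlinarith [h1, h2, h3, h4, hCS, hD0, hsig]
  have h2X : 2*X ≤ R := by
    have h5 : 2*X ≤ |2*X| := le_abs_self _
    have h6 : |2*X| = Real.sqrt ((2*X)^2) := (Real.sqrt_sq_eq_abs _).symm
    have h7 : Real.sqrt ((2*X)^2) ≤ Real.sqrt (R^2) := Real.sqrt_le_sqrt hsq
    rw [Real.sqrt_sq hR0] at h7
    linarith
  simp only [hR] at h2X
  nlinarith [h2X, hsig]

variable {n : ℕ}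

variable {n : ℕ}

lemma basis_sum (w : EuclideanSpace ℝ (Fin n)) :
    ∑ i, w i • EuclideanSpace.single i (1:ℝ) = w := by
  ext j
  rw [show ((∑ i, w i • EuclideanSpace.single i (1:ℝ)) j)
      = ∑ i, (w i • EuclideanSpace.single i (1:ℝ)) j from by rw [WithLp.ofLp_sum]; exact Finset.sum_apply j _ _]
  simp [EuclideanSpace.single_apply]

/-- expansion of a directional derivative in partials -/
lemma fderiv_eq_sum_pdE {f : EuclideanSpace ℝ (Fin n) → ℝ} {x : EuclideanSpace ℝ (Fin n)}
    (w : EuclideanSpace ℝ (Fin n)) :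
    fderiv ℝ f x w = ∑ i, w i * pdE n f i x := by
  conv_lhs => rw [← basis_sum w]
  rw [map_sum]
  exact Finset.sum_congr rfl (fun i _ => by rw [map_smul]; rfl)

/-- pdE of a C^k+1 function is C^k -/
lemma contDiff_pdE {f : EuclideanSpace ℝ (Fin n) → ℝ} {m : WithTop ℕ∞}
    (hf : ContDiff ℝ (m+1) f) (i : Fin n) : ContDiff ℝ m (pdE n f i) := by
  have h1 : ContDiff ℝ m (fderiv ℝ f) := hf.fderiv_right le_rfl
  exact (ContinuousLinearMap.apply ℝ ℝ (EuclideanSpace.single i 1)).contDiff.comp h1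


/-- Quadratic form of the Hessian at a local max is nonpositive. -/
lemma hess_quadform_nonpos {φ : EuclideanSpace ℝ (Fin n) → ℝ} (hφ : ContDiff ℝ 2 φ)
    {x : EuclideanSpace ℝ (Fin n)} (hmax : IsLocalMax φ x) (w : EuclideanSpace ℝ (Fin n)) :
    ∑ i, ∑ j, w i * w j * HessE n φ x i j ≤ 0 := by
  have hφ1 : Differentiable ℝ φ := hφ.differentiable two_ne_zero
  set F : EuclideanSpace ℝ (Fin n) → ℝ := fun y => fderiv ℝ φ y w with hF
  have hFd : ContDiff ℝ 1 F := by
    have h1 : ContDiff ℝ 1 (fderiv ℝ φ) := hφ.fderiv_right le_rfl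
    exact (ContinuousLinearMap.apply ℝ ℝ w).contDiff.comp h1
  have hline : ∀ t : ℝ, HasDerivAt (fun s : ℝ => x + s • w) w t := by
    intro t
    have h := ((hasDerivAt_id t).smul_const w).const_add x
    simpa using h
  set g : ℝ → ℝ := fun t => φ (x + t • w) with hg'
  set g₁ : ℝ → ℝ := fun t => F (x + t • w) with hg₁'
  have hg : ∀ t, HasDerivAt g (g₁ t) t := fun t =>
    (hφ1 (x + t • w)).hasFDerivAt.comp_hasDerivAt t (hline t)
  set m : ℝ := fderiv ℝ F x w with hm
  have hx0 : x + (0:ℝ) • w = x := by simp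
  have hg₁ : HasDerivAt g₁ m 0 := by
    have h1 : HasFDerivAt F (fderiv ℝ F x) (x + (0:ℝ) • w) := by
      rw [hx0]; exact ((hFd.differentiable one_ne_zero) x).hasFDerivAt
    exact h1.comp_hasDerivAt 0 (hline 0)
  have hgmax : IsLocalMax g 0 := by
    have hc : Filter.Tendsto (fun t : ℝ => x + t • w) (nhds 0) (nhds x) := by
      have h := Continuous.tendsto (show Continuous (fun t : ℝ => x + t • w) by fun_prop) 0
      rwa [hx0] at h
    have := hc.eventually hmax
    have hgx : g 0 = φ x := by rw [hg']; simp
    filter_upwards [this] with t ht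
    rw [hgx]; exact ht
  have hm0 : m ≤ 0 := secondDeriv_nonpos_of_isLocalMax hg hg₁ hgmax
  -- identify m with the quadratic form
  have hFexp : F = fun y => ∑ j, w j * pdE n φ j y := by
    funext y; exact fderiv_eq_sum_pdE w
  have hpdE_diff : ∀ j : Fin n, DifferentiableAt ℝ (pdE n φ j) x := by
    intro j
    have : ContDiff ℝ 1 (pdE n φ j) := contDiff_pdE (hφ.of_le (by norm_num)) j
    exact (this.differentiable one_ne_zero) x
  have hsum : HasFDerivAt (fun y => ∑ j, w j * pdE n φ j y)
      (∑ j, w j • fderiv ℝ (pdE n φ j) x) x := by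
    apply HasFDerivAt.fun_sum
    intro j _
    exact ((hpdE_diff j).hasFDerivAt).const_mul (w j)
  have hmeq : m = ∑ i, ∑ j, w i * w j * HessE n φ x i j := by
    rw [hm, fderiv_eq_sum_pdE w]
    apply Finset.sum_congr rfl
    intro i _
    have : pdE n F i x = ∑ j, w j * HessE n φ x i j := by
      rw [pdE, hFexp, hsum.fderiv]
      rw [ContinuousLinearMap.sum_apply]
      exact Finset.sum_congr rfl (fun j _ => by
        rw [ContinuousLinearMap.smul_apply]; rfl)
    rw [this, Finset.mul_sum]
    exact Finset.sum_congr rfl (fun j _ => by ring)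
  rw [← hmeq]; exact hm0

lemma hessE_symm {u : EuclideanSpace ℝ (Fin n) → ℝ} (hu : ContDiff ℝ 2 u)
    (x : EuclideanSpace ℝ (Fin n)) (i j : Fin n) :
    HessE n u x i j = HessE n u x j i := by
  have hd1 : ContDiff ℝ 1 (fderiv ℝ u) := hu.fderiv_right le_rfl
  have key : ∀ k l : Fin n, HessE n u x k l
      = fderiv ℝ (fderiv ℝ u) x (EuclideanSpace.single k 1) (EuclideanSpace.single l 1) := by
    intro k l
    have hcomp : HasFDerivAt (pdE n u l)
        ((ContinuousLinearMap.apply ℝ ℝ (EuclideanSpace.single l 1)).comp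
          (fderiv ℝ (fderiv ℝ u) x)) x := by
      exact (ContinuousLinearMap.apply ℝ ℝ (EuclideanSpace.single l 1)).hasFDerivAt.comp x
        ((hd1.differentiable one_ne_zero) x).hasFDerivAt
    show pdE n (pdE n u l) k x = _
    rw [pdE, hcomp.fderiv]
    rfl
  rw [key i j, key j i]
  exact (hu.contDiffAt.isSymmSndFDerivAt (by simp [minSmoothness_of_isRCLikeNormedField])).eq _ _

lemma hessE_comb {f g : EuclideanSpace ℝ (Fin n) → ℝ} (hf : ContDiff ℝ 2 f)
    (hg : ContDiff ℝ 2 g) (c d : ℝ) (x : EuclideanSpace ℝ (Fin n)) (i j : Fin n) :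
    HessE n (fun y => c * f y + d * g y) x i j
      = c * HessE n f x i j + d * HessE n g x i j := by
  have hf1 : Differentiable ℝ f := hf.differentiable two_ne_zero
  have hg1 : Differentiable ℝ g := hg.differentiable two_ne_zero
  have hpd : pdE n (fun y => c * f y + d * g y) j
      = fun y => c * pdE n f j y + d * pdE n g j y := by
    funext y
    have h1 : HasFDerivAt (fun y => c * f y + d * g y)
        (c • fderiv ℝ f y + d • fderiv ℝ g y) y :=
      (((hf1 y).hasFDerivAt).const_mul c).add (((hg1 y).hasFDerivAt).const_mul d)
    rw [pdE, h1.fderiv]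
    rfl
  have hfj : DifferentiableAt ℝ (pdE n f j) x :=
    ((contDiff_pdE (hf.of_le (by norm_num)) j).differentiable one_ne_zero) x
  have hgj : DifferentiableAt ℝ (pdE n g j) x :=
    ((contDiff_pdE (hg.of_le (by norm_num)) j).differentiable one_ne_zero) x
  show pdE n (pdE n (fun y => c * f y + d * g y) j) i x = _
  rw [hpd]
  have h2 : HasFDerivAt (fun y => c * pdE n f j y + d * pdE n g j y)
      (c • fderiv ℝ (pdE n f j) x + d • fderiv ℝ (pdE n g j) x) x :=
    (hfj.hasFDerivAt.const_mul c).add (hgj.hasFDerivAt.const_mul d)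
  rw [pdE, h2.fderiv]
  rfl

section Vfun
variable (M : Matrix (Fin n) (Fin n) ℝ) (b : EuclideanSpace ℝ (Fin n)) (h : ℝ)

/-- the comparison function v(x) = h∑(Mx+b)² -/
noncomputable def vfun : EuclideanSpace ℝ (Fin n) → ℝ :=
  fun x => h * ∑ k, (M.mulVec x k + b k)^2

/-- row-k linear functional x ↦ (Mx)ₖ as a CLM on EuclideanSpace -/
noncomputable def rowCLM (k : Fin n) : EuclideanSpace ℝ (Fin n) →L[ℝ] ℝ :=
  ∑ j, M k j • (PiLp.proj 2 (fun _ : Fin n => ℝ) j : EuclideanSpace ℝ (Fin n) →L[ℝ] ℝ)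

lemma rowCLM_apply (k : Fin n) (y : EuclideanSpace ℝ (Fin n)) :
    rowCLM M k y = M.mulVec y k := by
  rw [rowCLM, ContinuousLinearMap.sum_apply]
  simp [Matrix.mulVec, dotProduct]

lemma rowCLM_single (k i : Fin n) : rowCLM M k (EuclideanSpace.single i 1) = M k i := by
  rw [rowCLM_apply]
  simp [Matrix.mulVec, dotProduct, EuclideanSpace.single_apply]

lemma hasFDerivAt_q (k : Fin n) (x : EuclideanSpace ℝ (Fin n)) :
    HasFDerivAt (fun y : EuclideanSpace ℝ (Fin n) => M.mulVec y k + b k) (rowCLM M k) x := by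
  have h1 : (fun y : EuclideanSpace ℝ (Fin n) => M.mulVec y k + b k)
      = fun y => rowCLM M k y + b k := by
    funext y; rw [rowCLM_apply]
  rw [h1]
  exact (rowCLM M k).hasFDerivAt.add_const (b k)

lemma contDiff_q (k : Fin n) : ContDiff ℝ 2 (fun y : EuclideanSpace ℝ (Fin n) => M.mulVec y k + b k) := by
  have h1 : (fun y : EuclideanSpace ℝ (Fin n) => M.mulVec y k + b k)
      = fun y => rowCLM M k y + b k := by
    funext y; rw [rowCLM_apply]
  rw [h1]
  exact (rowCLM M k).contDiff.add contDiff_const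

lemma contDiff_vfun : ContDiff ℝ 2 (vfun M b h) := by
  have h1 : ContDiff ℝ 2 (fun x : EuclideanSpace ℝ (Fin n) => ∑ k, (M.mulVec x k + b k)^2) :=
    ContDiff.sum (fun k _ => (contDiff_q M b k).pow 2)
  unfold vfun
  exact contDiff_const.mul h1

lemma pdE_vfun (i : Fin n) :
    pdE n (vfun M b h) i = fun x : EuclideanSpace ℝ (Fin n) => ∑ k, (2 * h * M k i) * (M.mulVec x k + b k) := by
  funext x
  have hsq : ∀ k : Fin n, HasFDerivAt (fun y : EuclideanSpace ℝ (Fin n) => (M.mulVec y k + b k)^2)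
      ((2 * (M.mulVec x k + b k)) • rowCLM M k) x := by
    intro k
    have h1 : (fun y : EuclideanSpace ℝ (Fin n) => (M.mulVec y k + b k)^2)
        = fun y : EuclideanSpace ℝ (Fin n) => (M.mulVec y k + b k) * (M.mulVec y k + b k) := by
      funext y; ring
    rw [h1]
    have := (hasFDerivAt_q M b k x).fun_mul (hasFDerivAt_q M b k x)
    refine this.congr_fderiv ?_
    ext y
    simp only [ContinuousLinearMap.smul_apply, ContinuousLinearMap.add_apply, smul_eq_mul]
    ring
  have hv : HasFDerivAt (vfun M b h)
      (h • ∑ k, (2 * (M.mulVec x k + b k)) • rowCLM M k) x := by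
    apply HasFDerivAt.const_mul _ h
    exact HasFDerivAt.fun_sum (fun k _ => hsq k)
  rw [pdE, hv.fderiv]
  simp only [ContinuousLinearMap.smul_apply, ContinuousLinearMap.sum_apply, smul_eq_mul,
    Finset.mul_sum]
  exact Finset.sum_congr rfl (fun k _ => by rw [rowCLM_single]; ring)

lemma hessE_vfun (x : EuclideanSpace ℝ (Fin n)) (i j : Fin n) :
    HessE n (vfun M b h) x i j = 2 * h * ∑ k, M k j * M k i := by
  show pdE n (pdE n (vfun M b h) j) i x = _
  have h0 : pdE n (vfun M b h) j
      = (fun x : EuclideanSpace ℝ (Fin n) => ∑ k, (2 * h * M k j) * (M.mulVec x k + b k)) :=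
    pdE_vfun M b h j
  rw [h0]
  have hlin : HasFDerivAt (fun x : EuclideanSpace ℝ (Fin n) => ∑ k, (2 * h * M k j) * (M.mulVec x k + b k))
      (∑ k, (2 * h * M k j) • rowCLM M k) x :=
    HasFDerivAt.fun_sum (fun k _ => (hasFDerivAt_q M b k x).const_mul _)
  rw [pdE]
  rw [hlin.fderiv]
  simp only [ContinuousLinearMap.sum_apply, ContinuousLinearMap.smul_apply, smul_eq_mul,
    Finset.mul_sum]
  exact Finset.sum_congr rfl (fun k _ => by rw [rowCLM_single]; ring)

end Vfun

/-- If u ≥ 0 solves σ̃₂(D²u) = 1 and the ellipsoid E = {|Mx+b| ≤ 1} is contained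
    in the sublevel set {u ≤ h}, then σ̃₂(M²) ≥ 1/(4h²). -/
theorem ellipsoid_lower_bound (n : ℕ) [NeZero n]
    (Ω : Set (EuclideanSpace ℝ (Fin n))) (hΩ : IsOpen Ω)
    (u : EuclideanSpace ℝ (Fin n) → ℝ) (hu : ContDiff ℝ 2 u)
    (hpos : ∀ x ∈ Ω, 0 ≤ u x)
    (hsol : ∀ x ∈ Ω, sig2 n (HessE n u x) = 1)
    (h : ℝ) (hh : 0 < h)
    (M : Matrix (Fin n) (Fin n) ℝ) (hM : M.IsSymm) (hMpd : M.PosDef)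
    (b : EuclideanSpace ℝ (Fin n))
    (hE : {x : EuclideanSpace ℝ (Fin n) | ∑ i, (M.mulVec x.ofLp i + b i)^2 ≤ 1} ⊆ {x ∈ Ω | u x ≤ h}) :
    sig2 n (M * M) ≥ 1 / (4 * h^2) := by
  classical
  set E : Set (EuclideanSpace ℝ (Fin n)) := {x | ∑ i, (M.mulVec x i + b i)^2 ≤ 1} with hEdef
  have hEΩ : ∀ x ∈ E, x ∈ Ω := fun x hx => (hE hx).1
  have hEuh : ∀ x ∈ E, u x ≤ h := fun x hx => (hE hx).2
  set v : EuclideanSpace ℝ (Fin n) → ℝ := vfun M b h with hvdef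
  have hvC : ContDiff ℝ 2 v := contDiff_vfun M b h
  set sq : EuclideanSpace ℝ (Fin n) → ℝ := fun x => ∑ k, (M.mulVec x k + b k)^2 with hsqdef
  have hsqc : Continuous sq := by
    apply continuous_finset_sum
    exact fun k _ => ((contDiff_q M b k).continuous).pow 2
  have hsq0 : ∀ x, 0 ≤ sq x := fun x => Finset.sum_nonneg (fun k _ => sq_nonneg _)
  have hveq : ∀ x, v x = h * sq x := fun x => rfl
  -- the affine equivalence
  have hdet : IsUnit M.det := (ne_of_gt hMpd.det_pos).isUnit
  have hinv : Invertible M := M.invertibleOfIsUnitDet hdet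
  set T : EuclideanSpace ℝ (Fin n) ≃L[ℝ] EuclideanSpace ℝ (Fin n) :=
    LinearEquiv.toContinuousLinearEquiv
      ((WithLp.linearEquiv 2 ℝ (Fin n → ℝ)).trans
        ((M.toLinearEquiv' hinv).trans (WithLp.linearEquiv 2 ℝ (Fin n → ℝ)).symm)) with hTdef
  have hT : ∀ (x : EuclideanSpace ℝ (Fin n)) (i : Fin n), T x i = M.mulVec x i := fun x i => rfl
  -- center
  set x₀ : EuclideanSpace ℝ (Fin n) := T.symm (-b) with hx₀def
  have hx₀ : ∀ i, M.mulVec x₀ i + b i = 0 := by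
    intro i
    have h1 : T x₀ = -b := T.apply_symm_apply (-b)
    have h2 : M.mulVec x₀ i = T x₀ i := (hT x₀ i).symm
    rw [h2, h1]
    simp [PiLp.neg_apply]
  have hsqx₀ : sq x₀ = 0 := by
    rw [hsqdef]
    simp only
    rw [Finset.sum_eq_zero]
    intro k _
    rw [hx₀ k]
    ring
  have hx₀E : x₀ ∈ E := by
    rw [hEdef]
    show sq x₀ ≤ 1
    rw [hsqx₀]; norm_num
  have hx₀U : sq x₀ < 1 := by rw [hsqx₀]; norm_num
  -- compactness of E
  set K : Set (EuclideanSpace ℝ (Fin n)) := {y | ∑ i, (y i)^2 ≤ 1} with hKdef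
  have hKc : IsCompact K := by
    have hcont : Continuous (fun y : EuclideanSpace ℝ (Fin n) => ∑ i, (y i)^2) := by
      apply continuous_finset_sum
      intro i _
      exact ((PiLp.proj 2 (fun _ : Fin n => ℝ) i : EuclideanSpace ℝ (Fin n) →L[ℝ] ℝ).continuous).pow 2
    have hclosed : IsClosed K := isClosed_le hcont continuous_const
    have hsub : K ⊆ Metric.closedBall 0 1 := by
      intro y hy
      rw [Metric.mem_closedBall, dist_zero_right, EuclideanSpace.norm_eq]
      have h1 : ∑ i, ‖y i‖^2 = ∑ i, (y i)^2 := by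
        exact Finset.sum_congr rfl (fun i _ => by rw [Real.norm_eq_abs, sq_abs])
      rw [h1]
      calc Real.sqrt (∑ i, (y i)^2) ≤ Real.sqrt 1 := Real.sqrt_le_sqrt hy
      _ = 1 := Real.sqrt_one
    exact (isCompact_closedBall 0 1).of_isClosed_subset hclosed hsub
  have hEK : E = (fun y => T.symm (y - b)) '' K := by
    ext x
    constructor
    · intro hx
      refine ⟨T x + b, ?_, ?_⟩
      · rw [hKdef]
        show (∑ i, ((T x + b) i)^2) ≤ 1
        have : ∀ i, (T x + b) i = M.mulVec x i + b i := by
          intro i; rw [PiLp.add_apply, hT]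
        rw [Finset.sum_congr rfl (fun i _ => by rw [this i])]
        exact hx
      · show T.symm ((T x + b) - b) = x
        rw [add_sub_cancel_right]
        exact T.symm_apply_apply x
    · rintro ⟨y, hy, rfl⟩
      show (∑ i, (M.mulVec (T.symm (y - b)) i + b i)^2) ≤ 1
      have h1 : ∀ i, M.mulVec (T.symm (y - b)) i + b i = y i := by
        intro i
        have h2 : M.mulVec (T.symm (y - b)) i = T (T.symm (y - b)) i := (hT _ i).symm
        rw [h2, T.apply_symm_apply, PiLp.sub_apply]
        ring
      rw [Finset.sum_congr rfl (fun i _ => by rw [h1 i])]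
      exact hy
  have hEcomp : IsCompact E := by
    rw [hEK]
    exact hKc.image (T.symm.continuous.comp (continuous_id.sub continuous_const))
  -- convexity of E
  have hEconv : Convex ℝ E := by
    intro x₁ h₁ x₂ h₂ θ₁ θ₂ hθ₁ hθ₂ hθ
    show (∑ i, (M.mulVec (θ₁ • x₁ + θ₂ • x₂) i + b i)^2) ≤ 1
    have hmv : ∀ i, M.mulVec (θ₁ • x₁ + θ₂ • x₂) i + b i
        = θ₁ * (M.mulVec x₁ i + b i) + θ₂ * (M.mulVec x₂ i + b i) := by
      intro i
      have h3 : M.mulVec (θ₁ • x₁ + θ₂ • x₂) = θ₁ • M.mulVec x₁ + θ₂ • M.mulVec x₂ := by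
        rw [Matrix.mulVec_add, Matrix.mulVec_smul, Matrix.mulVec_smul]
      rw [h3]
      simp only [Pi.add_apply, Pi.smul_apply, smul_eq_mul]
      have h4 : θ₁ + θ₂ = 1 := hθ
      linear_combination (-(b i)) * h4
    rw [Finset.sum_congr rfl (fun i _ => by rw [hmv i])]
    have hptwise : ∀ i : Fin n, (θ₁ * (M.mulVec x₁ i + b i) + θ₂ * (M.mulVec x₂ i + b i))^2
        ≤ θ₁ * (M.mulVec x₁ i + b i)^2 + θ₂ * (M.mulVec x₂ i + b i)^2 := by
      intro i
      nlinarith [sq_nonneg (M.mulVec x₁ i + b i - (M.mulVec x₂ i + b i)), mul_nonneg hθ₁ hθ₂,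
        hθ]
    calc (∑ i, (θ₁ * (M.mulVec x₁ i + b i) + θ₂ * (M.mulVec x₂ i + b i))^2)
        ≤ ∑ i, (θ₁ * (M.mulVec x₁ i + b i)^2 + θ₂ * (M.mulVec x₂ i + b i)^2) :=
          Finset.sum_le_sum (fun i _ => hptwise i)
    _ = θ₁ * (∑ i, (M.mulVec x₁ i + b i)^2) + θ₂ * (∑ i, (M.mulVec x₂ i + b i)^2) := by
          rw [Finset.sum_add_distrib, Finset.mul_sum, Finset.mul_sum]
    _ ≤ θ₁ * 1 + θ₂ * 1 := by
          apply add_le_add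
          · exact mul_le_mul_of_nonneg_left h₁ hθ₁
          · exact mul_le_mul_of_nonneg_left h₂ hθ₂
    _ = 1 := by linarith [hθ]
  -- membership: E-interior via sq < 1
  have hUopen : IsOpen {x | sq x < 1} := isOpen_lt hsqc continuous_const
  have hUE : {x | sq x < 1} ⊆ E := by
    intro x hx
    have h1 : sq x < 1 := hx
    show sq x ≤ 1
    exact le_of_lt h1
  have hnhds : ∀ x, sq x < 1 → E ∈ nhds x := by
    intro x hx
    exact Filter.mem_of_superset (hUopen.mem_nhds hx) hUE
  have hEsq : ∀ x ∈ E, sq x ≤ 1 := fun x hx => hx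
  -- the matrix Tmat
  set Tmat : Matrix (Fin n) (Fin n) ℝ := fun i j => 2 * h * ((M * M) i j) with hTmatdef
  have hMM : ∀ i j, (M * M) i j = ∑ k, M k j * M k i := by
    intro i j
    rw [Matrix.mul_apply]
    exact Finset.sum_congr rfl (fun k _ => by rw [← hM.apply k i]; ring)
  have hHv : ∀ x i j, HessE n (vfun M b h) x i j = Tmat i j := by
    intro x i j
    rw [hessE_vfun, hTmatdef]
    simp only
    rw [hMM]
  have hMMs : (M * M).IsSymm := by
    unfold Matrix.IsSymm
    rw [Matrix.transpose_mul, hM]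
  have hMMsymm : ∀ j, (M * M) 0 j = (M * M) j 0 := fun j => hMMs.apply j 0
  -- nonvanishing of the 0-0 Hessian entry on E
  have hkey0 : ∀ z ∈ E, HessE n u z 0 0 ≠ 0 := by
    intro z hz hzero
    have h1 : sig2 n (HessE n u z) = 1 := hsol z (hEΩ z hz)
    rw [sig2, hzero, zero_mul, zero_sub] at h1
    have h2 : (0:ℝ) ≤ ∑ j ∈ Finset.univ.filter (fun j => j ≠ 0), (HessE n u z 0 j)^2 :=
      Finset.sum_nonneg (fun j _ => sq_nonneg _)
    linarith
  -- continuity of 0-0 Hessian entry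
  have hacont : Continuous (fun x => HessE n u x 0 0) := by
    have hc1 : ContDiff ℝ 1 (pdE n u 0) := contDiff_pdE (hu.of_le (by norm_num)) 0
    have hc2 : Continuous (fderiv ℝ (pdE n u 0)) := hc1.continuous_fderiv one_ne_zero
    exact ((ContinuousLinearMap.apply ℝ ℝ
      (EuclideanSpace.single (0 : Fin n) (1:ℝ))).continuous).comp hc2
  -- === max point ===
  set φ : EuclideanSpace ℝ (Fin n) → ℝ := fun y => 1 * u y + (-1) * vfun M b h y with hφdef
  have hφC : ContDiff ℝ 2 φ := (contDiff_const.mul hu).add (contDiff_const.mul hvC)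
  obtain ⟨p, hpE, hpmax⟩ := hEcomp.exists_isMaxOn ⟨x₀, hx₀E⟩ hφC.continuous.continuousOn
  have hφx₀ : φ x₀ = u x₀ := by
    show 1 * u x₀ + -1 * v x₀ = u x₀
    rw [hveq x₀, hsqx₀]; ring
  obtain ⟨p', hp'U, hp'max⟩ : ∃ p', sq p' < 1 ∧ IsMaxOn φ E p' := by
    by_cases hcase : sq p < 1
    · exact ⟨p, hcase, hpmax⟩
    · have hsq1 : sq p = 1 := le_antisymm (hEsq p hpE) (not_lt.1 hcase)
      have hφp : φ p = u p - h := by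
        rw [hφdef]; simp only
        show 1 * u p + -1 * v p = u p - h
        rw [hveq p, hsq1]; ring
      have h1 : φ p ≤ 0 := by rw [hφp]; linarith [hEuh p hpE]
      have h2 : 0 ≤ φ x₀ := by rw [hφx₀]; exact hpos x₀ (hEΩ x₀ hx₀E)
      have h3 : φ x₀ = φ p := le_antisymm (isMaxOn_iff.1 hpmax x₀ hx₀E) (by linarith)
      refine ⟨x₀, hx₀U, ?_⟩
      intro x hx
      exact le_trans (isMaxOn_iff.1 hpmax x hx) (le_of_eq h3.symm)
  have hp'E : p' ∈ E := hUE hp'U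
  have hp'loc : IsLocalMax φ p' := hp'max.isLocalMax (hnhds p' hp'U)
  -- === min point ===
  set ψ : EuclideanSpace ℝ (Fin n) → ℝ := fun y => 1 * u y + 1 * vfun M b h y with hψdef
  have hψC : ContDiff ℝ 2 ψ := (contDiff_const.mul hu).add (contDiff_const.mul hvC)
  obtain ⟨q, hqE, hqmin⟩ := hEcomp.exists_isMinOn ⟨x₀, hx₀E⟩ hψC.continuous.continuousOn
  have hψx₀ : ψ x₀ = u x₀ := by
    rw [hψdef]; simp only
    show 1 * u x₀ + 1 * v x₀ = u x₀
    rw [hveq x₀, hsqx₀]; ring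
  obtain ⟨q', hq'U, hq'min⟩ : ∃ q', sq q' < 1 ∧ IsMinOn ψ E q' := by
    by_cases hcase : sq q < 1
    · exact ⟨q, hcase, hqmin⟩
    · have hsq1 : sq q = 1 := le_antisymm (hEsq q hqE) (not_lt.1 hcase)
      have hψq : ψ q = u q + h := by
        rw [hψdef]; simp only
        show 1 * u q + 1 * v q = u q + h
        rw [hveq q, hsq1]; ring
      have h1 : h ≤ ψ q := by rw [hψq]; linarith [hpos q (hEΩ q hqE)]
      have h2 : ψ x₀ ≤ h := by rw [hψx₀]; exact hEuh x₀ hx₀E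
      have h3 : ψ x₀ = ψ q := le_antisymm (by linarith) (isMinOn_iff.1 hqmin x₀ hx₀E)
      refine ⟨x₀, hx₀U, ?_⟩
      intro x hx
      exact le_trans (le_of_eq h3) (isMinOn_iff.1 hqmin x hx)
  have hq'E : q' ∈ E := hUE hq'U
  have hq'loc : IsLocalMin ψ q' := hq'min.isLocalMin (hnhds q' hq'U)
  -- quadratic form inequalities
  have hquadmax : ∀ w : EuclideanSpace ℝ (Fin n),
      (∑ i, ∑ j, w i * w j * HessE n u p' i j) ≤ ∑ i, ∑ j, w i * w j * Tmat i j := by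
    intro w
    have h1 := hess_quadform_nonpos hφC hp'loc w
    have h2 : ∀ (i j : Fin n), w i * w j * HessE n φ p' i j
        = w i * w j * HessE n u p' i j - w i * w j * Tmat i j := by
      intro i j
      have e1 : HessE n φ p' i j
          = 1 * HessE n u p' i j + (-1) * HessE n (vfun M b h) p' i j :=
        hessE_comb hu hvC 1 (-1) p' i j
      rw [e1, hHv p' i j]
      ring
    rw [Finset.sum_congr rfl (fun i _ => Finset.sum_congr rfl (fun j _ => h2 i j))] at h1
    rw [Finset.sum_congr rfl (fun i _ => Finset.sum_sub_distrib _ _)] at h1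
    rw [Finset.sum_sub_distrib] at h1
    linarith
  have hquadmin : ∀ w : EuclideanSpace ℝ (Fin n),
      (∑ i, ∑ j, w i * w j * (-(HessE n u q' i j))) ≤ ∑ i, ∑ j, w i * w j * Tmat i j := by
    intro w
    set ψ' : EuclideanSpace ℝ (Fin n) → ℝ := fun y => (-1) * u y + (-1) * vfun M b h y with hψ'def
    have hψ'C : ContDiff ℝ 2 ψ' := (contDiff_const.mul hu).add (contDiff_const.mul hvC)
    have hψ'loc : IsLocalMax ψ' q' := by
      have := hq'loc
      unfold IsLocalMin IsMinFilter at this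
      unfold IsLocalMax IsMaxFilter
      filter_upwards [this] with y hy
      have : 1 * u q' + 1 * vfun M b h q' ≤ 1 * u y + 1 * vfun M b h y := hy
      simp only [hψ'def]
      linarith
    have h1 := hess_quadform_nonpos hψ'C hψ'loc w
    have h2 : ∀ (i j : Fin n), w i * w j * HessE n ψ' q' i j
        = w i * w j * (-(HessE n u q' i j)) - w i * w j * Tmat i j := by
      intro i j
      have e1 : HessE n ψ' q' i j
          = (-1) * HessE n u q' i j + (-1) * HessE n (vfun M b h) q' i j :=
        hessE_comb hu hvC (-1) (-1) q' i j
      rw [e1, hHv q' i j]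
      ring
    rw [Finset.sum_congr rfl (fun i _ => Finset.sum_congr rfl (fun j _ => h2 i j))] at h1
    rw [Finset.sum_congr rfl (fun i _ => Finset.sum_sub_distrib _ _)] at h1
    rw [Finset.sum_sub_distrib] at h1
    linarith
  -- sign dichotomy and application of sig2_mono
  have hTsymm : ∀ j, Tmat 0 j = Tmat j 0 := by
    intro j
    rw [hTmatdef]
    simp only
    rw [hMMsymm j]
  have hbound : 1 ≤ sig2 n Tmat := by
    rcases Ne.lt_or_gt (hkey0 p' hp'E) with hneg | hposa
    · -- negative branch: use the min point
      have hq'neg : HessE n u q' 0 0 < 0 := by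
        rcases Ne.lt_or_gt (hkey0 q' hq'E) with h' | h'
        · exact h'
        · exfalso
          have hIcc : (0:ℝ) ∈ Set.Icc (HessE n u p' 0 0) (HessE n u q' 0 0) :=
            ⟨le_of_lt hneg, le_of_lt h'⟩
          have := (hEconv.isPreconnected).intermediate_value hp'E hq'E
            (hacont.continuousOn) hIcc
          obtain ⟨z, hzE, hz0⟩ := this
          exact hkey0 z hzE hz0
      -- S = -(HessE u q')
      set S : Matrix (Fin n) (Fin n) ℝ := fun i j => -(HessE n u q' i j) with hSdef
      have hs1 : sig2 n S = 1 := by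
        have h1 : sig2 n (HessE n u q') = 1 := hsol q' (hEΩ q' hq'E)
        rw [sig2] at h1 ⊢
        rw [hSdef]
        simp only
        rw [show (∑ j ∈ Finset.univ.filter (fun j => j ≠ 0), -(HessE n u q' j j))
            = -(∑ j ∈ Finset.univ.filter (fun j => j ≠ 0), HessE n u q' j j) from
          Finset.sum_neg_distrib _]
        rw [Finset.sum_congr rfl (fun j _ => by rw [neg_pow] <;> ring_nf : ∀ j ∈ Finset.univ.filter (fun j : Fin n => j ≠ 0), (-(HessE n u q' 0 j))^2 = (HessE n u q' 0 j)^2)]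
        rw [← h1]
        ring
      apply sig2_mono n S Tmat _ hTsymm (hquadmin) hs1 _
      · intro j
        rw [hSdef]
        simp only
        rw [hessE_symm hu q' 0 j]
      · rw [hSdef]
        simp only
        linarith
    · -- positive branch: use the max point
      apply sig2_mono n (HessE n u p') Tmat _ hTsymm hquadmax (hsol p' (hEΩ p' hp'E)) hposa
      intro j
      exact hessE_symm hu p' 0 j
  -- conclude
  have hscale : sig2 n Tmat = 4 * h^2 * sig2 n (M * M) := by
    rw [sig2, sig2, hTmatdef]
    simp only
    rw [show (∑ j ∈ Finset.univ.filter (fun j => j ≠ 0), 2 * h * (M * M) j j)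
        = 2 * h * ∑ j ∈ Finset.univ.filter (fun j => j ≠ 0), (M * M) j j from
      (Finset.mul_sum _ _ _).symm]
    rw [show (∑ j ∈ Finset.univ.filter (fun j => j ≠ 0), (2 * h * (M * M) 0 j)^2)
        = 4 * h^2 * ∑ j ∈ Finset.univ.filter (fun j => j ≠ 0), ((M * M) 0 j)^2 from by
      rw [Finset.mul_sum]
      exact Finset.sum_congr rfl (fun j _ => by ring)]
    ring
  rw [ge_iff_le, div_le_iff₀ (by positivity : (0:ℝ) < 4 * h^2)]
  nlinarith [hbound, hscale]
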